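/- Let $G$ be a group and $H, K \le G$ subgroups such that $H$ contains an element $h$ of infinite order with $\langle h \rangle$ of finite index in $H$, and $K$ contains an element $k$ of infinite order with $\langle k \rangle$ of finite index in $K$. Let $C \le H$ and $D \le K$ be any infinite subgroups. Then $H \cap K$ is infinite if and only if $C \cap D$ is infinite. -/

import Mathlib

private lemma aux_zpow_relIndex {G : Type*} [Group G] {x : G} (hx : ¬ IsOfFinOrder x)
    {m : ℤ} (hm : m ≠ 0) :
    (Subgroup.zpowers (x ^ m)).relIndex (Subgroup.zpowers x) ≠ 0 := by
  have hinj : Function.Injective fun n : ℤ => x ^ n :=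
    injective_zpow_iff_not_isOfFinOrder.mpr hx
  set φ : Multiplicative ℤ →* G := zpowersHom G x with hφ
  have hmap : Subgroup.map φ ⊤ = Subgroup.zpowers x := by
    ext g
    simp only [Subgroup.mem_map, Subgroup.mem_top, true_and, Subgroup.mem_zpowers_iff]
    constructor
    · rintro ⟨n, rfl⟩; exact ⟨n.toAdd, rfl⟩
    · rintro ⟨k, rfl⟩; exact ⟨Multiplicative.ofAdd k, rfl⟩
  have hcomap : Subgroup.comap φ (Subgroup.zpowers (x ^ m)) =
      AddSubgroup.toSubgroup (AddSubgroup.zmultiples m) := by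
    ext n
    simp only [Subgroup.mem_comap, Subgroup.mem_zpowers_iff]
    constructor
    · rintro ⟨j, hj⟩
      have : x ^ (m * j) = x ^ (Multiplicative.toAdd n) := by
        rw [zpow_mul]; exact hj
      have hmj : m * j = Multiplicative.toAdd n := hinj this
      exact ⟨j, by simpa [mul_comm] using hmj⟩
    · rintro ⟨j, hj⟩
      refine ⟨j, ?_⟩
      have : j • m = Multiplicative.toAdd n := hj
      rw [smul_eq_mul] at this
      show (x ^ m) ^ j = φ n
      rw [zpowersHom_apply, ← zpow_mul, mul_comm, this]
  have key : (Subgroup.zpowers (x ^ m)).relIndex (Subgroup.zpowers x) = m.natAbs := by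
    rw [← hmap, ← Subgroup.relIndex_comap (Subgroup.zpowers (x ^ m)) φ ⊤, hcomap, Subgroup.relIndex_top_right,
      AddSubgroup.index_toSubgroup, Int.index_zmultiples]
  rw [key]
  exact fun e => hm (Int.natAbs_eq_zero.mp e)

private lemma aux_relIndex_ne_zero {G : Type*} [Group G] {H C : Subgroup G} {h : G}
    (hh : h ∈ H) (hford : ¬ IsOfFinOrder h)
    (hfi : (Subgroup.zpowers h).relIndex H ≠ 0)
    (hCH : C ≤ H) (hC : (C : Set G).Infinite) :
    C.relIndex H ≠ 0 := by
  have r1 : (Subgroup.zpowers h).relIndex C ≠ 0 :=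
    fun e => hfi (Subgroup.relIndex_eq_zero_of_le_right hCH e)
  set E := Subgroup.zpowers h ⊓ C with hE
  have r2 : E.relIndex C ≠ 0 := by
    rw [hE, Subgroup.inf_relIndex_right]; exact r1
  have hEinf : (E : Set G).Infinite := by
    by_contra hfin
    rw [Set.not_infinite] at hfin
    haveI : Finite E := hfin.to_subtype
    have hle : E ≤ C := inf_le_right
    haveI : Finite (E.subgroupOf C) :=
      Finite.of_equiv E (Subgroup.subgroupOfEquivOfLe hle).symm.toEquiv
    haveI : (E.subgroupOf C).FiniteIndex := ⟨r2⟩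
    haveI : Finite C :=
      Finite.of_equiv _ (Subgroup.groupEquivQuotientProdSubgroup (s := E.subgroupOf C)).symm
    exact hC (Set.finite_coe_iff.mp ‹Finite C›)
  obtain ⟨y, hy⟩ := (hEinf.diff (Set.finite_singleton 1)).nonempty
  have hyE : y ∈ E := hy.1
  have hy1 : y ≠ 1 := by simpa using hy.2
  obtain ⟨m, hmx⟩ := (Subgroup.mem_inf.mp hyE).1
  have hm : m ≠ 0 := by
    rintro rfl; exact hy1 (by simpa using hmx.symm)
  have hx := aux_zpow_relIndex hford hm
  have r3 : (Subgroup.zpowers (h ^ m)).relIndex H ≠ 0 :=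
    Subgroup.relIndex_ne_zero_trans hx hfi
  have hle : Subgroup.zpowers (h ^ m) ≤ C := by
    rw [Subgroup.zpowers_le]
    have hmx' : h ^ m = y := hmx
    rw [hmx']
    exact (Subgroup.mem_inf.mp hyE).2
  exact fun e => r3 (Subgroup.relIndex_eq_zero_of_le_left hle e)

/-- For infinite virtually cyclic subgroups `H, K` of `G` and any infinite subgroups
`C ≤ H`, `D ≤ K`, the intersection `H ∩ K` is infinite iff `C ∩ D` is infinite. -/
theorem inter_infinite_iff_of_infinite_subgroups {G : Type*} [Group G]
    (H K : Subgroup G)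
    (h : G) (hh : h ∈ H) (hfordh : ¬ IsOfFinOrder h)
    (hfih : ((Subgroup.zpowers h).subgroupOf H).FiniteIndex)
    (k : G) (hk : k ∈ K) (hfordk : ¬ IsOfFinOrder k)
    (hfik : ((Subgroup.zpowers k).subgroupOf K).FiniteIndex)
    (C D : Subgroup G) (hCH : C ≤ H) (hDK : D ≤ K)
    (hC : (C : Set G).Infinite) (hD : (D : Set G).Infinite) :
    ((H : Set G) ∩ (K : Set G)).Infinite ↔ ((C : Set G) ∩ (D : Set G)).Infinite := by
  constructor
  · intro hHK
    have hL : ((H ⊓ K : Subgroup G) : Set G).Infinite := by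
      rwa [Subgroup.coe_inf]
    have cH : C.relIndex H ≠ 0 :=
      aux_relIndex_ne_zero hh hfordh hfih.index_ne_zero hCH hC
    have cK : D.relIndex K ≠ 0 :=
      aux_relIndex_ne_zero hk hfordk hfik.index_ne_zero hDK hD
    have c1 : C.relIndex (H ⊓ K) ≠ 0 :=
      fun e => cH (Subgroup.relIndex_eq_zero_of_le_right inf_le_left e)
    have c2 : D.relIndex (H ⊓ K) ≠ 0 :=
      fun e => cK (Subgroup.relIndex_eq_zero_of_le_right inf_le_right e)
    have c3 : (C ⊓ D).relIndex (H ⊓ K) ≠ 0 := Subgroup.relIndex_inf_ne_zero c1 c2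
    have hCDle : C ⊓ D ≤ H ⊓ K := inf_le_inf hCH hDK
    rw [← Subgroup.coe_inf]
    by_contra hfin
    rw [Set.not_infinite] at hfin
    haveI : Finite (C ⊓ D : Subgroup G) := hfin.to_subtype
    haveI : Finite ((C ⊓ D).subgroupOf (H ⊓ K)) :=
      Finite.of_equiv _ (Subgroup.subgroupOfEquivOfLe hCDle).symm.toEquiv
    haveI : ((C ⊓ D).subgroupOf (H ⊓ K)).FiniteIndex := ⟨c3⟩
    haveI : Finite (H ⊓ K : Subgroup G) :=
      Finite.of_equiv _
        (Subgroup.groupEquivQuotientProdSubgroup (s := (C ⊓ D).subgroupOf (H ⊓ K))).symm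
    exact hL (Set.finite_coe_iff.mp ‹Finite (H ⊓ K : Subgroup G)›)
  · intro hCD
    exact hCD.mono
      (Set.inter_subset_inter (SetLike.coe_subset_coe.mpr hCH) (SetLike.coe_subset_coe.mpr hDK))
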